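/- Let n ≥ 1, τ ∈ S_n and a ∈ (ℤ/2)^n. If the conjugacy class of τ in S_n (with the conjugation operation ▷) is of type D, then the conjugacy class of (a,τ) in W_n is of type D. -/

import Mathlib

/-- The action of a permutation `σ ∈ S_n` on a vector `a ∈ (ℤ/2)^n`:
`(σ · a)_i = a_{σ⁻¹ i}`. -/
def permAct {n : ℕ} (σ : Equiv.Perm (Fin n)) (a : Fin n → ZMod 2) : Fin n → ZMod 2 :=
  fun i => a (σ⁻¹ i)

/-- The underlying set of the hyperoctahedral group `W n = (ℤ/2)^n ⋊ S_n`. -/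
@[ext]
structure W (n : ℕ) where
  vec : Fin n → ZMod 2
  perm : Equiv.Perm (Fin n)

/-- Group structure of `W n`: `(a,σ)(b,μ) = (a + σ·b, σμ)`. -/
instance (n : ℕ) : Group (W n) where
  mul x y := ⟨x.vec + permAct x.perm y.vec, x.perm * y.perm⟩
  one := ⟨0, 1⟩
  inv x := ⟨permAct x.perm⁻¹ (-x.vec), x.perm⁻¹⟩
  mul_assoc x y z := by
    refine W.ext ?_ ?_
    · show (x.vec + permAct x.perm y.vec) + permAct (x.perm * y.perm) z.vec
        = x.vec + permAct x.perm (y.vec + permAct y.perm z.vec)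
      funext i
      simp [permAct, mul_inv_rev, Equiv.Perm.mul_apply, add_assoc]
    · exact mul_assoc _ _ _
  one_mul x := by
    refine W.ext ?_ ?_
    · show (0 : Fin n → ZMod 2) + permAct 1 x.vec = x.vec
      funext i; simp [permAct]
    · exact one_mul _
  mul_one x := by
    refine W.ext ?_ ?_
    · show x.vec + permAct x.perm 0 = x.vec
      funext i; simp [permAct]
    · exact mul_one _
  inv_mul_cancel x := by
    refine W.ext ?_ ?_
    · show permAct x.perm⁻¹ (-x.vec) + permAct x.perm⁻¹ x.vec = 0
      funext i; simp only [permAct, Pi.add_apply, Pi.neg_apply, Pi.zero_apply, neg_add_cancel]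
    · exact inv_mul_cancel _

@[simp] theorem W.mul_vec {n : ℕ} (x y : W n) :
    (x * y).vec = x.vec + permAct x.perm y.vec := rfl
@[simp] theorem W.mul_perm {n : ℕ} (x y : W n) :
    (x * y).perm = x.perm * y.perm := rfl
@[simp] theorem W.one_vec {n : ℕ} : (1 : W n).vec = 0 := rfl
@[simp] theorem W.one_perm {n : ℕ} : (1 : W n).perm = 1 := rfl
@[simp] theorem W.inv_vec {n : ℕ} (x : W n) :
    (x⁻¹).vec = permAct x.perm⁻¹ (-x.vec) := rfl
@[simp] theorem W.inv_perm {n : ℕ} (x : W n) : (x⁻¹).perm = x.perm⁻¹ := rfl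

/-- Conjugation `x ▷ y = x y x⁻¹` in a group. -/
def conjAct' {G : Type*} [Group G] (x y : G) : G := x * y * x⁻¹

/-- `sq(x,y) = x ▷ (y ▷ (x ▷ y))`. -/
def sqD {G : Type*} [Group G] (x y : G) : G := conjAct' x (conjAct' y (conjAct' x y))

/-- Conjugacy class of `x` in the group `G`. -/
def conjClass {G : Type*} [Group G] (x : G) : Set G := {y | ∃ t : G, y = t * x * t⁻¹}

/-- A subset `O` of a group is of type D. -/
def IsTypeD {G : Type*} [Group G] (O : Set G) : Prop :=
  ∃ R S : Set G, R ⊆ O ∧ S ⊆ O ∧ R.Nonempty ∧ S.Nonempty ∧ Disjoint R S ∧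
    (∀ r ∈ R, ∀ r' ∈ R, conjAct' r r' ∈ R) ∧
    (∀ s ∈ S, ∀ s' ∈ S, conjAct' s s' ∈ S) ∧
    (∀ r ∈ R, ∀ s ∈ S, conjAct' r s ∈ S ∧ conjAct' s r ∈ R) ∧
    (∃ a ∈ R, ∃ b ∈ S, sqD a b ≠ b)

/-- The subgroup `K_n ⋊ S_n` of `W n`, where `K_n = {a : a_1 + ⋯ + a_n = 0}`. -/
def Ksub (n : ℕ) : Subgroup (W n) where
  carrier := {x | ∑ i, x.vec i = 0}
  one_mem' := by simp
  mul_mem' := by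
    intro x y hx hy
    simp only [Set.mem_setOf_eq] at *
    rw [W.mul_vec]
    simp only [Pi.add_apply, Finset.sum_add_distrib, hx, zero_add, permAct]
    rw [Equiv.sum_comp x.perm⁻¹ y.vec]
    exact hy
  inv_mem' := by
    intro x hx
    simp only [Set.mem_setOf_eq] at *
    rw [W.inv_vec]
    simp only [permAct, inv_inv, Pi.neg_apply]
    rw [Finset.sum_neg_distrib, Equiv.sum_comp x.perm x.vec, hx, neg_zero]

theorem conj_mem_conjClass {G : Type*} [Group G] {y : G} (g : G) {x : G}
    (hx : x ∈ conjClass y) : conjAct' g x ∈ conjClass y := by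
  obtain ⟨t, rfl⟩ := hx
  exact ⟨g * t, by simp [conjAct', mul_assoc]⟩

@[simp] theorem W.conj_perm {n : ℕ} (x y : W n) :
    (conjAct' x y).perm = conjAct' x.perm y.perm := rfl

theorem W.sq_perm {n : ℕ} (x y : W n) :
    (sqD x y).perm = sqD x.perm y.perm := rfl

/-- if the conjugacy class of `τ` in `S_n` is of type D, then so
is the conjugacy class of `(a,τ)` in `W n`. -/
theorem typeD_lift (n : ℕ) (hn : 1 ≤ n) (τ : Equiv.Perm (Fin n))
    (a : Fin n → ZMod 2) (hτ : IsTypeD (conjClass τ)) :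
    IsTypeD (conjClass (W.mk a τ)) := by
  obtain ⟨R, S, hRO, hSO, hRne, hSne, hdis, hRR, hSS, hRS, a₀, ha₀, b₀, hb₀, hsq⟩ := hτ
  have lift : ∀ r ∈ conjClass τ, ∃ x : W n, x ∈ conjClass (W.mk a τ) ∧ x.perm = r := by
    rintro r ⟨t, rfl⟩
    refine ⟨⟨0, t⟩ * ⟨a, τ⟩ * (⟨0, t⟩ : W n)⁻¹, ⟨⟨0, t⟩, rfl⟩, ?_⟩
    simp
  refine ⟨{x | x ∈ conjClass (W.mk a τ) ∧ x.perm ∈ R},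
          {x | x ∈ conjClass (W.mk a τ) ∧ x.perm ∈ S},
          fun x hx => hx.1, fun x hx => hx.1, ?_, ?_, ?_, ?_, ?_, ?_, ?_⟩
  · obtain ⟨r, hr⟩ := hRne
    obtain ⟨x, hx, hxp⟩ := lift r (hRO hr)
    exact ⟨x, hx, hxp ▸ hr⟩
  · obtain ⟨s, hs⟩ := hSne
    obtain ⟨x, hx, hxp⟩ := lift s (hSO hs)
    exact ⟨x, hx, hxp ▸ hs⟩
  · rw [Set.disjoint_left]
    intro x hx hx'
    exact Set.disjoint_left.mp hdis hx.2 hx'.2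
  · intro r hr r' hr'
    exact ⟨conj_mem_conjClass r hr'.1, by
      rw [Set.mem_setOf_eq] at *
      rw [W.conj_perm]; exact hRR _ hr.2 _ hr'.2⟩
  · intro s hs s' hs'
    exact ⟨conj_mem_conjClass s hs'.1, by
      rw [W.conj_perm]; exact hSS _ hs.2 _ hs'.2⟩
  · intro r hr s hs
    exact ⟨⟨conj_mem_conjClass r hs.1, by rw [W.conj_perm]; exact (hRS _ hr.2 _ hs.2).1⟩,
           ⟨conj_mem_conjClass s hr.1, by rw [W.conj_perm]; exact (hRS _ hr.2 _ hs.2).2⟩⟩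
  · obtain ⟨x, hx, hxp⟩ := lift a₀ (hRO ha₀)
    obtain ⟨y, hy, hyp⟩ := lift b₀ (hSO hb₀)
    refine ⟨x, ⟨hx, hxp ▸ ha₀⟩, y, ⟨hy, hyp ▸ hb₀⟩, fun h => hsq ?_⟩
    have := congrArg W.perm h
    rwa [W.sq_perm, hxp, hyp] at this
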